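/- The algebra 𝔐₀ is simple: it contains no nontrivial proper ideals. -/

import Mathlib

/-- The 2-dimensional "good basis" algebra `𝔐₀` with basis `U, V` satisfying
`U² = V`, `V² = U`, `U·V = V·U = 0`; coordinates w.r.t. the basis `{U, V}`. -/
def GoodAlg (F : Type*) := F × F

namespace GoodAlg

variable {F : Type*} [Field F]

instance : AddCommGroup (GoodAlg F) := inferInstanceAs (AddCommGroup (F × F))
instance : Module F (GoodAlg F) := inferInstanceAs (Module F (F × F))

def mk2 (a b : F) : GoodAlg F := (a, b)

/-- Coefficient of `U`. -/
def uc (x : GoodAlg F) : F := x.1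
/-- Coefficient of `V`. -/
def vc (x : GoodAlg F) : F := x.2

/-- Multiplication: `(aU + bV)·(cU + dV) = bd·U + ac·V`, i.e. `U² = V`, `V² = U`, `UV = VU = 0`. -/
instance : Mul (GoodAlg F) := ⟨fun x y => mk2 (vc x * vc y) (uc x * uc y)⟩

/-- The basis element `U`. -/
def U : GoodAlg F := mk2 1 0
/-- The basis element `V`. -/
def V : GoodAlg F := mk2 0 1

end GoodAlg

open GoodAlg in
/-- The algebra `𝔐₀` is simple: it has no nontrivial proper ideals. -/
theorem M0_is_simple {F : Type*} [Field F] (h3 : (3 : F) ≠ 0)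
    (ω : F) (hω : ω ^ 2 + ω + 1 = 0) :
    ∀ W : Submodule F (GoodAlg F),
      (∀ x ∈ W, ∀ y : GoodAlg F, x * y ∈ W ∧ y * x ∈ W) → W = ⊥ ∨ W = ⊤ := by
  intro W hW
  by_cases hbot : W = ⊥
  · exact Or.inl hbot
  · right
    obtain ⟨x, hxW, hx0⟩ := Submodule.exists_mem_ne_zero_of_ne_bot hbot
    -- x * U = (0, x.1), x * V = (x.2, 0)
    have hxU : ((0, x.1) : GoodAlg F) ∈ W := by
      have := (hW x hxW U).1
      have he : x * U = ((0, x.1) : GoodAlg F) := by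
        show mk2 _ _ = _
        simp [U, mk2, uc, vc]
        rfl
      exact cast (congrArg (· ∈ W) he) this
    have hxV : ((x.2, 0) : GoodAlg F) ∈ W := by
      have := (hW x hxW V).1
      have he : x * V = ((x.2, 0) : GoodAlg F) := by
        show mk2 _ _ = _
        simp [V, mk2, uc, vc]
        rfl
      exact cast (congrArg (· ∈ W) he) this
    have hUV : (U : GoodAlg F) ∈ W ∧ (V : GoodAlg F) ∈ W := by
      rcases (by
        by_contra h
        push_neg at h
        exact hx0 (Prod.ext h.1 h.2) : x.1 ≠ 0 ∨ x.2 ≠ 0) with ha | hb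
      · have hV : (V : GoodAlg F) ∈ W := by
          have := W.smul_mem (x.1)⁻¹ hxU
          have he : (x.1)⁻¹ • ((0, x.1) : GoodAlg F) = V := by
            show ((x.1)⁻¹ • ((0, x.1) : F × F)) = ((0,1) : F × F)
            simp [Prod.smul_def, ha]
          exact cast (congrArg (· ∈ W) he) this
        have hU : (U : GoodAlg F) ∈ W := by
          have := (hW V hV V).1
          have he : (V * V : GoodAlg F) = U := by
            show mk2 _ _ = _
            simp [U, V, mk2, uc, vc]
            rfl
          exact cast (congrArg (· ∈ W) he) this
        exact ⟨hU, hV⟩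
      · have hU : (U : GoodAlg F) ∈ W := by
          have := W.smul_mem (x.2)⁻¹ hxV
          have he : (x.2)⁻¹ • ((x.2, 0) : GoodAlg F) = U := by
            show ((x.2)⁻¹ • ((x.2, 0) : F × F)) = ((1,0) : F × F)
            simp [Prod.smul_def, hb]
          exact cast (congrArg (· ∈ W) he) this
        have hV : (V : GoodAlg F) ∈ W := by
          have := (hW U hU U).1
          have he : (U * U : GoodAlg F) = V := by
            show mk2 _ _ = _
            simp [U, V, mk2, uc, vc]
            rfl
          exact cast (congrArg (· ∈ W) he) this
        exact ⟨hU, hV⟩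
    rw [eq_top_iff]
    intro y _
    have hy : y = y.1 • U + y.2 • V := by
      show y = (y.1 • ((1,0) : F × F)) + (y.2 • ((0,1) : F × F))
      simp [Prod.smul_def, Prod.ext_iff]
      rfl
    rw [hy]
    exact W.add_mem (W.smul_mem _ hUV.1) (W.smul_mem _ hUV.2)
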